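/- Let Φ be an analytic self-map of the upper half-plane ℍ with inf_{z∈ℍ} Im Φ(z)/Im z = A > 1 (hyperbolic type with Denjoy–Wolff point ∞). Then every orbit zₙ = Φⁿ(z₀) stays in a fixed non-tangential approach region: there exists δ > 0, depending only on z₀, such that |Arg zₙ − π/2| < π/2 − δ for all n. -/

import Mathlib

open Complex Filter Real
open Set Metric

-- |z - w| < |z - conj w| for z, w in upper half-plane
lemma half_lt {z w : ℂ} (hz : 0 < z.im) (hw : 0 < w.im) :
    norm (z - w) < norm (z - (starRingEnd ℂ) w) := by
  have h : (norm (z - w))^2 < (norm (z - (starRingEnd ℂ) w))^2 := by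
    rw [Complex.sq_norm, Complex.sq_norm]
    simp only [Complex.normSq_apply, Complex.sub_re, Complex.sub_im, Complex.conj_re,
      Complex.conj_im]
    nlinarith [mul_pos hz hw]
  exact lt_of_pow_lt_pow_left₀ 2 (norm_nonneg _) h

lemma half_ne {z w : ℂ} (hz : 0 < z.im) (hw : 0 < w.im) :
    z - (starRingEnd ℂ) w ≠ 0 := by
  intro h
  have : (z - (starRingEnd ℂ) w).im = 0 := by rw [h]; simp
  simp only [Complex.sub_im, Complex.conj_im] at this
  linarith

-- the inverse Cayley map sends the unit disk to the upper half-plane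
lemma cayley_mem {w ζ : ℂ} (hw : 0 < w.im) (hζ : norm ζ < 1) :
    0 < ((w - (starRingEnd ℂ) w * ζ) / (1 - ζ)).im := by
  have h1 : Complex.normSq ζ < 1 := by
    rw [← Complex.sq_norm]; nlinarith [norm_nonneg ζ]
  have hden : (1 : ℂ) - ζ ≠ 0 := by
    intro h
    have : ζ = 1 := by linear_combination -h
    rw [this] at hζ; simp at hζ
  have h2 : 0 < Complex.normSq (1 - ζ) := Complex.normSq_pos.2 hden
  rw [Complex.div_im, div_sub_div_same]
  apply div_pos _ h2
  simp only [Complex.normSq_apply] at h1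
  simp only [Complex.sub_im, Complex.sub_re, Complex.mul_im, Complex.mul_re, Complex.conj_re,
    Complex.conj_im, Complex.one_re, Complex.one_im]
  nlinarith

-- Schwarz-Pick for the upper half-plane
lemma schwarz_pick {f : ℂ → ℂ} (hd : DifferentiableOn ℂ f {z : ℂ | 0 < z.im})
    (hm : Set.MapsTo f {z : ℂ | 0 < z.im} {z : ℂ | 0 < z.im})
    {z w : ℂ} (hz : 0 < z.im) (hw : 0 < w.im) :
    norm (f z - f w) * norm (z - (starRingEnd ℂ) w) ≤
      norm (z - w) * norm (f z - (starRingEnd ℂ) (f w)) := by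
  have hfz : 0 < (f z).im := hm hz
  have hfw : 0 < (f w).im := hm hw
  set T : ℂ → ℂ := fun ζ => (w - (starRingEnd ℂ) w * ζ) / (1 - ζ) with hT
  set g : ℂ → ℂ := fun ζ => (f (T ζ) - f w) / (f (T ζ) - (starRingEnd ℂ) (f w)) with hg
  -- facts on the ball
  have hball : ∀ ζ ∈ ball (0:ℂ) 1, norm ζ < 1 := by
    intro ζ hζ; simpa using mem_ball_zero_iff.1 hζ
  have hTmem : ∀ ζ ∈ ball (0:ℂ) 1, 0 < (T ζ).im := fun ζ hζ => cayley_mem hw (hball ζ hζ)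
  have hone : ∀ ζ ∈ ball (0:ℂ) 1, (1:ℂ) - ζ ≠ 0 := by
    intro ζ hζ h
    have he : ζ = 1 := by linear_combination -h
    have hb := hball ζ hζ; rw [he] at hb; simp at hb
  have hTd : DifferentiableOn ℂ T (ball (0:ℂ) 1) := by
    apply DifferentiableOn.div
    · exact (differentiable_const _).differentiableOn.sub
        ((differentiable_const _).mul differentiable_id).differentiableOn
    · exact (differentiable_const _).differentiableOn.sub differentiable_id.differentiableOn
    · exact hone
  have hfTd : DifferentiableOn ℂ (fun ζ => f (T ζ)) (ball (0:ℂ) 1) :=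
    hd.comp hTd (fun ζ hζ => hTmem ζ hζ)
  have hden : ∀ ζ ∈ ball (0:ℂ) 1, f (T ζ) - (starRingEnd ℂ) (f w) ≠ 0 :=
    fun ζ hζ => half_ne (hm (hTmem ζ hζ)) hfw
  have hgd : DifferentiableOn ℂ g (ball (0:ℂ) 1) := by
    apply DifferentiableOn.div
    · exact hfTd.sub (differentiable_const _).differentiableOn
    · exact hfTd.sub (differentiable_const _).differentiableOn
    · exact hden
  have hgm : Set.MapsTo g (ball (0:ℂ) 1) (ball (0:ℂ) 1) := by
    intro ζ hζ
    rw [mem_ball_zero_iff]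
    have h := half_lt (hm (hTmem ζ hζ)) hfw
    have h2 := (norm_pos_iff.mpr (half_ne (hm (hTmem ζ hζ)) hfw))
    show norm _ < 1
    rw [hg, norm_div, div_lt_one h2]
    exact h
  have hg0 : g 0 = 0 := by
    have hT0 : T 0 = w := by simp [hT]
    simp [hg, hT0]
  -- apply Schwarz at ζ₀
  set ζ₀ : ℂ := (z - w) / (z - (starRingEnd ℂ) w) with hζ₀
  have hz₀ : ζ₀ ∈ ball (0:ℂ) 1 := by
    rw [mem_ball_zero_iff]
    show norm _ < 1
    rw [hζ₀, norm_div, div_lt_one (norm_pos_iff.mpr (half_ne hz hw))]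
    exact half_lt hz hw
  have hTz₀ : T ζ₀ = z := by
    rw [hT, hζ₀]
    have hne := half_ne hz hw
    have hne2 : w - (starRingEnd ℂ) w ≠ 0 := by
      intro h
      have h2 : (w - (starRingEnd ℂ) w).im = 0 := by rw [h]; simp
      simp only [Complex.sub_im, Complex.conj_im] at h2
      linarith
    field_simp
    ring_nf
    have e : w * z * (w - (starRingEnd ℂ) w)⁻¹ - z * (starRingEnd ℂ) w * (w - (starRingEnd ℂ) w)⁻¹ =
        z * (w - (starRingEnd ℂ) w) * (w - (starRingEnd ℂ) w)⁻¹ := by ring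
    rw [e, mul_assoc, mul_inv_cancel₀ hne2, mul_one]
  have key := Complex.norm_le_norm_of_mapsTo_ball hgd (hgm.mono_right ball_subset_closedBall) hg0 (mem_ball_zero_iff.1 hz₀)
  have key2 : norm ((f z - f w) / (f z - (starRingEnd ℂ) (f w))) ≤
      norm ((z - w) / (z - (starRingEnd ℂ) w)) := by
    simp only [hg, hTz₀] at key
    rw [hζ₀] at key
    simpa using key
  rw [norm_div, norm_div] at key2
  have d1 : 0 < norm (z - (starRingEnd ℂ) w) := norm_pos_iff.mpr (half_ne hz hw)
  have d2 : 0 < norm (f z - (starRingEnd ℂ) (f w)) := norm_pos_iff.mpr (half_ne hfz hfw)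
  rw [div_le_div_iff₀ d2 d1] at key2
  linarith

lemma arg_bound {z : ℂ} (hz : 0 < z.im) {M : ℝ} (hM : 0 ≤ M) (h : |z.re| ≤ M * z.im) :
    |Complex.arg z - π / 2| ≤ Real.arctan M := by
  have habs : 0 < norm z := by
    apply norm_pos_iff.mpr
    intro hz0; rw [hz0] at hz; simp at hz
  have hs : 0 < Real.sqrt (1 + M ^ 2) := Real.sqrt_pos.2 (by positivity)
  have habs_eq : Real.sqrt (z.re ^ 2 + z.im ^ 2) = norm z := by
    rw [Complex.norm_def, Complex.normSq_apply]; ring_nf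
  have key : |z.re| * Real.sqrt (1 + M ^ 2) ≤ M * norm z := by
    have h1 : |z.re| * Real.sqrt (1 + M ^ 2) = Real.sqrt (z.re ^ 2 * (1 + M ^ 2)) := by
      rw [Real.sqrt_mul (sq_nonneg _), Real.sqrt_sq_eq_abs]
    have h2 : M * norm z = Real.sqrt (M ^ 2 * (z.re ^ 2 + z.im ^ 2)) := by
      rw [Real.sqrt_mul (sq_nonneg _), Real.sqrt_sq hM, habs_eq]
    rw [h1, h2]
    apply Real.sqrt_le_sqrt
    nlinarith [abs_nonneg z.re, hz.le, abs_le.1 h]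
  have hx : |z.re / norm z| ≤ M / Real.sqrt (1 + M ^ 2) := by
    rw [abs_div, abs_of_pos habs, div_le_div_iff₀ habs hs]
    linarith
  have harg : Complex.arg z - π / 2 = -Real.arcsin (z.re / norm z) := by
    rw [Complex.arg_of_im_pos hz, Real.arccos_eq_pi_div_two_sub_arcsin]; ring
  rw [harg, abs_neg, Real.arctan_eq_arcsin]
  rcases abs_le.1 hx with ⟨hl, hr⟩
  rw [abs_le]
  constructor
  · rw [← Real.arcsin_neg]
    exact Real.monotone_arcsin hl
  · exact Real.monotone_arcsin hr

theorem orbits_nontangential (Φ : ℂ → ℂ)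
    (hd : DifferentiableOn ℂ Φ {z : ℂ | 0 < z.im})
    (hm : Set.MapsTo Φ {z : ℂ | 0 < z.im} {z : ℂ | 0 < z.im})
    (A : ℝ) (hA1 : 1 < A)
    (hA : IsGLB {r : ℝ | ∃ z : ℂ, 0 < z.im ∧ r = (Φ z).im / z.im} A) :
    ∀ z₀ : ℂ, 0 < z₀.im → ∃ δ : ℝ, 0 < δ ∧
      ∀ n : ℕ, |Complex.arg (Φ^[n] z₀) - π / 2| < π / 2 - δ := by
  intro z₀ hz₀
  set zn : ℕ → ℂ := fun n => Φ^[n] z₀ with hzn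
  -- iterates are differentiable self-maps
  have hiter : ∀ n : ℕ, DifferentiableOn ℂ (Φ^[n]) {z : ℂ | 0 < z.im} ∧
      Set.MapsTo (Φ^[n]) {z : ℂ | 0 < z.im} {z : ℂ | 0 < z.im} := by
    intro n
    induction n with
    | zero => exact ⟨differentiableOn_id, Set.mapsTo_id _⟩
    | succ n ih =>
      rw [Function.iterate_succ']
      exact ⟨hd.comp ih.1 ih.2, hm.comp ih.2⟩
  have hpos : ∀ n, 0 < (zn n).im := fun n => (hiter n).2 hz₀
  -- A * Im z ≤ Im Φ z
  have hAstep : ∀ n, A * (zn n).im ≤ (zn (n + 1)).im := by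
    intro n
    have h1 : A ≤ (Φ (zn n)).im / (zn n).im := hA.1 ⟨zn n, hpos n, rfl⟩
    have h2 : zn (n + 1) = Φ (zn n) := Function.iterate_succ_apply' Φ n z₀
    rw [h2]
    rw [le_div_iff₀ (hpos n)] at h1
    linarith
  have hmono : ∀ n, z₀.im ≤ (zn n).im := by
    intro n
    induction n with
    | zero => exact le_refl _
    | succ n ih => nlinarith [hAstep n, hpos n]
  -- Schwarz-Pick constant
  set ρ : ℝ := norm (zn 1 - z₀) / norm (zn 1 - (starRingEnd ℂ) z₀) with hρdef
  have hden : 0 < norm (zn 1 - (starRingEnd ℂ) z₀) := norm_pos_iff.mpr (half_ne (hpos 1) hz₀)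
  have hρ0 : 0 ≤ ρ := div_nonneg (norm_nonneg _) hden.le
  have hρ1 : ρ < 1 := by
    rw [hρdef, div_lt_one hden]
    exact half_lt (hpos 1) hz₀
  set C : ℝ := 2 * ρ / (1 - ρ) with hCdef
  have hC0 : 0 ≤ C := div_nonneg (by linarith) (by linarith)
  -- orbit increments
  have hstep : ∀ n, norm (zn (n + 1) - zn n) ≤ C * (zn n).im := by
    intro n
    have sp := schwarz_pick (hiter n).1 (hiter n).2 (hpos 1) hz₀
    have e1 : Φ^[n] (zn 1) = zn (n + 1) := (Function.iterate_succ_apply Φ n z₀).symm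
    have e2 : Φ^[n] z₀ = zn n := rfl
    rw [e1, e2] at sp
    have hb : norm (zn (n + 1) - (starRingEnd ℂ) (zn n)) ≤
        norm (zn (n + 1) - zn n) + 2 * (zn n).im := by
      have tri : norm (zn (n + 1) - (starRingEnd ℂ) (zn n)) ≤
          norm (zn (n + 1) - zn n) + norm (zn n - (starRingEnd ℂ) (zn n)) := by
        have : zn (n + 1) - (starRingEnd ℂ) (zn n) =
            (zn (n + 1) - zn n) + (zn n - (starRingEnd ℂ) (zn n)) := by ring
        rw [this]; exact norm_add_le _ _
      have habs2 : norm (zn n - (starRingEnd ℂ) (zn n)) = 2 * (zn n).im := by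
        rw [Complex.sub_conj, norm_mul, Complex.norm_I, mul_one, Complex.norm_real, Real.norm_eq_abs]
        exact _root_.abs_of_nonneg (by linarith [hpos n])
      linarith
    -- a * D ≤ N * b with ρ = N / D
    have key : norm (zn (n + 1) - zn n) ≤
        ρ * norm (zn (n + 1) - (starRingEnd ℂ) (zn n)) := by
      rw [hρdef, div_mul_eq_mul_div, le_div_iff₀ hden]
      linarith [sp]
    have ha0 := norm_nonneg (zn (n + 1) - zn n)
    have hb0 := norm_nonneg (zn (n + 1) - (starRingEnd ℂ) (zn n))
    rw [hCdef]
    rw [div_mul_eq_mul_div, le_div_iff₀ (by linarith : (0:ℝ) < 1 - ρ)]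
    nlinarith [hpos n]
  -- sum of imaginary parts
  have hsum : ∀ n, (A - 1) * ∑ k ∈ Finset.range n, (zn k).im ≤ (zn n).im := by
    intro n
    induction n with
    | zero => simp [le_of_lt (hpos 0)]
    | succ n ih =>
      rw [Finset.sum_range_succ]
      nlinarith [hAstep n, hpos n]
  -- real part bound
  set M : ℝ := |z₀.re| / z₀.im + C / (A - 1) with hMdef
  have hM0 : 0 ≤ M := by
    apply add_nonneg
    · exact div_nonneg (abs_nonneg _) hz₀.le
    · exact div_nonneg hC0 (by linarith)
  have hre : ∀ n, |(zn n).re| ≤ M * (zn n).im := by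
    intro n
    have hdist : dist (zn 0) (zn n) ≤ ∑ i ∈ Finset.range n, dist (zn i) (zn (i + 1)) :=
      dist_le_range_sum_dist zn n
    have hd2 : ∑ i ∈ Finset.range n, dist (zn i) (zn (i + 1)) ≤
        C * ∑ i ∈ Finset.range n, (zn i).im := by
      rw [Finset.mul_sum]
      apply Finset.sum_le_sum
      intro i _
      rw [Complex.dist_eq, ← norm_neg]
      have : -(zn i - zn (i + 1)) = zn (i + 1) - zn i := by ring
      rw [this]
      exact hstep i
    have h3 : C * ∑ i ∈ Finset.range n, (zn i).im ≤ C / (A - 1) * (zn n).im := by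
      have hsle : ∑ i ∈ Finset.range n, (zn i).im ≤ (zn n).im / (A - 1) := by
        rw [le_div_iff₀ (by linarith : (0:ℝ) < A - 1)]
        linarith [hsum n]
      calc C * ∑ i ∈ Finset.range n, (zn i).im ≤ C * ((zn n).im / (A - 1)) :=
            mul_le_mul_of_nonneg_left hsle hC0
        _ = C / (A - 1) * (zn n).im := by ring
    have h4 : |(zn n).re - z₀.re| ≤ norm (zn n - z₀) := by
      have := Complex.abs_re_le_norm (zn n - z₀)
      simpa using this
    have h5 : norm (zn n - z₀) = dist (zn 0) (zn n) := by
      rw [dist_comm, Complex.dist_eq]; rfl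
    have h6 : |z₀.re| ≤ |z₀.re| / z₀.im * (zn n).im := by
      rw [div_mul_eq_mul_div, le_div_iff₀ hz₀]
      nlinarith [hmono n, abs_nonneg z₀.re]
    have h7 : |(zn n).re| ≤ |z₀.re| + |(zn n).re - z₀.re| := by
      have := abs_add_le z₀.re ((zn n).re - z₀.re)
      simpa using this
    rw [hMdef, add_mul]
    linarith
  -- conclusion
  refine ⟨(π / 2 - Real.arctan M) / 2, by linarith [Real.arctan_lt_pi_div_two M], ?_⟩
  intro n
  have := arg_bound (hpos n) hM0 (hre n)
  have h2 := Real.arctan_lt_pi_div_two M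
  calc |Complex.arg (Φ^[n] z₀) - π / 2| ≤ Real.arctan M := this
    _ < π / 2 - (π / 2 - Real.arctan M) / 2 := by linarith
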